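/- For every ν > 0, every t ≥ 0, every nonzero integer k, every η ∈ ℝ and every integer l, one has 1 ≤ 2·( ν^{−1/6}·√( ν^{1/3} / ((ν^{1/3}(t − η/k))² + 1) ) + ν^{1/3}·√(k² + (η − kt)² + l²) ). -/

import Mathlib

/-- Lemma 4.2(2) of the paper, inequality (4.15): for `ν > 0`, `t ≥ 0`, `k ≠ 0`, `η`, `l`,
`1 ≤ 2(ν^{−1/6}·√(−Ṁ₁/M₁) + ν^{1/3}·|k, η−kt, l|)`, where
`−Ṁ₁/M₁ = ν^{1/3}/((ν^{1/3}(t − η/k))² + 1)`. -/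
theorem stmt_14 (ν : ℝ) (hν : 0 < ν) (t : ℝ) (ht : 0 ≤ t) (k : ℤ) (hk : k ≠ 0)
    (η : ℝ) (l : ℤ) :
    1 ≤ 2 * (ν ^ (-(1 : ℝ) / 6) *
        Real.sqrt (ν ^ ((1 : ℝ) / 3) / ((ν ^ ((1 : ℝ) / 3) * (t - η / (k : ℝ))) ^ 2 + 1)) +
      ν ^ ((1 : ℝ) / 3) * Real.sqrt ((k : ℝ) ^ 2 + (η - k * t) ^ 2 + (l : ℝ) ^ 2)) := by
  have hk' : (k : ℝ) ≠ 0 := Int.cast_ne_zero.mpr hk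
  have hk1 : (1 : ℝ) ≤ |(k : ℝ)| := by
    rw [← Int.cast_abs]
    exact_mod_cast Int.one_le_abs hk
  have ha : (0 : ℝ) < ν ^ ((1 : ℝ) / 3) := Real.rpow_pos_of_pos hν _
  have hb : (0 : ℝ) < ν ^ (-(1 : ℝ) / 6) := Real.rpow_pos_of_pos hν _
  set u := t - η / (k : ℝ) with hu
  have hkey : η - (k : ℝ) * t = -((k : ℝ) * u) := by
    rw [hu, mul_sub, mul_div_assoc', mul_div_cancel_left₀ η hk']; ring
  have hT1 : 0 ≤ ν ^ (-(1 : ℝ) / 6) *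
      Real.sqrt (ν ^ ((1 : ℝ) / 3) / ((ν ^ ((1 : ℝ) / 3) * u) ^ 2 + 1)) :=
    mul_nonneg hb.le (Real.sqrt_nonneg _)
  have hT2 : 0 ≤ ν ^ ((1 : ℝ) / 3) *
      Real.sqrt ((k : ℝ) ^ 2 + (η - k * t) ^ 2 + (l : ℝ) ^ 2) :=
    mul_nonneg ha.le (Real.sqrt_nonneg _)
  rcases le_or_gt (|u|) (ν ^ (-(1 : ℝ) / 3)) with h | h
  · -- term₁ ≥ 1/2
    have hx : (ν ^ ((1 : ℝ) / 3) * u) ^ 2 ≤ 1 := by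
      have h1 : |ν ^ ((1 : ℝ) / 3) * u| ≤ 1 := by
        rw [abs_mul, abs_of_pos ha]
        calc ν ^ ((1 : ℝ) / 3) * |u| ≤ ν ^ ((1 : ℝ) / 3) * ν ^ (-(1 : ℝ) / 3) :=
              mul_le_mul_of_nonneg_left h ha.le
          _ = 1 := by
              rw [← Real.rpow_add hν]; norm_num
      calc (ν ^ ((1 : ℝ) / 3) * u) ^ 2 = |ν ^ ((1 : ℝ) / 3) * u| ^ 2 := (sq_abs _).symm
        _ ≤ 1 ^ 2 := pow_le_pow_left₀ (abs_nonneg _) h1 2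
        _ = 1 := one_pow 2
    have hfrac : ν ^ ((1 : ℝ) / 3) / 2 ≤
        ν ^ ((1 : ℝ) / 3) / ((ν ^ ((1 : ℝ) / 3) * u) ^ 2 + 1) := by
      apply div_le_div_of_nonneg_left ha.le (by positivity)
      linarith
    have hroot : Real.sqrt (ν ^ ((1 : ℝ) / 3)) = ν ^ ((1 : ℝ) / 6) := by
      rw [Real.sqrt_eq_rpow, ← Real.rpow_mul hν.le]; norm_num
    have hval : Real.sqrt (ν ^ ((1 : ℝ) / 3) / 2) = ν ^ ((1 : ℝ) / 6) / Real.sqrt 2 := by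
      rw [Real.sqrt_div ha.le, hroot]
    have hsq : ν ^ ((1 : ℝ) / 6) / Real.sqrt 2 ≤
        Real.sqrt (ν ^ ((1 : ℝ) / 3) / ((ν ^ ((1 : ℝ) / 3) * u) ^ 2 + 1)) := by
      rw [← hval]; exact Real.sqrt_le_sqrt hfrac
    have hprod : ν ^ (-(1 : ℝ) / 6) * ν ^ ((1 : ℝ) / 6) = 1 := by
      rw [← Real.rpow_add hν]; norm_num
    have hs2 : Real.sqrt 2 ≤ 2 := by
      nlinarith [Real.sq_sqrt (by norm_num : (0:ℝ) ≤ 2), Real.sqrt_nonneg 2]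
    have hs2pos : (0:ℝ) < Real.sqrt 2 := Real.sqrt_pos.mpr (by norm_num)
    have hterm1 : (1 : ℝ) / 2 ≤ ν ^ (-(1 : ℝ) / 6) *
        Real.sqrt (ν ^ ((1 : ℝ) / 3) / ((ν ^ ((1 : ℝ) / 3) * u) ^ 2 + 1)) := by
      have h2 : ν ^ (-(1 : ℝ) / 6) * (ν ^ ((1 : ℝ) / 6) / Real.sqrt 2) ≤
          ν ^ (-(1 : ℝ) / 6) *
            Real.sqrt (ν ^ ((1 : ℝ) / 3) / ((ν ^ ((1 : ℝ) / 3) * u) ^ 2 + 1)) :=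
        mul_le_mul_of_nonneg_left hsq hb.le
      have h3 : ν ^ (-(1 : ℝ) / 6) * (ν ^ ((1 : ℝ) / 6) / Real.sqrt 2) = 1 / Real.sqrt 2 := by
        rw [mul_div_assoc', hprod]
      have h4 : (1 : ℝ) / 2 ≤ 1 / Real.sqrt 2 :=
        one_div_le_one_div_of_le hs2pos hs2
      linarith [h3 ▸ h2]
    linarith
  · -- term₂ ≥ 1
    have hu2 : (ν ^ (-(1 : ℝ) / 3)) ^ 2 ≤ u ^ 2 := by
      calc (ν ^ (-(1 : ℝ) / 3)) ^ 2 ≤ |u| ^ 2 :=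
            pow_le_pow_left₀ (Real.rpow_pos_of_pos hν _).le h.le 2
        _ = u ^ 2 := sq_abs u
    have hek : (η - (k : ℝ) * t) ^ 2 = (k : ℝ) ^ 2 * u ^ 2 := by
      rw [hkey]; ring
    have hk2 : (1 : ℝ) ≤ (k : ℝ) ^ 2 := by
      calc (1:ℝ) = 1 ^ 2 := (one_pow 2).symm
        _ ≤ |(k:ℝ)| ^ 2 := pow_le_pow_left₀ (by norm_num) hk1 2
        _ = (k:ℝ)^2 := sq_abs _
    have hge : (ν ^ (-(1 : ℝ) / 3)) ^ 2 ≤ (k : ℝ) ^ 2 + (η - k * t) ^ 2 + (l : ℝ) ^ 2 := by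
      have : u ^ 2 ≤ (k : ℝ) ^ 2 * u ^ 2 := le_mul_of_one_le_left (sq_nonneg _) hk2
      have hk2nn : (0:ℝ) ≤ (k:ℝ)^2 := sq_nonneg _
      have hl2 : (0:ℝ) ≤ (l:ℝ)^2 := sq_nonneg _
      rw [hek]; nlinarith
    have hsq : ν ^ (-(1 : ℝ) / 3) ≤
        Real.sqrt ((k : ℝ) ^ 2 + (η - k * t) ^ 2 + (l : ℝ) ^ 2) := by
      calc ν ^ (-(1 : ℝ) / 3) = Real.sqrt ((ν ^ (-(1 : ℝ) / 3)) ^ 2) :=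
            (Real.sqrt_sq (Real.rpow_pos_of_pos hν _).le).symm
        _ ≤ _ := Real.sqrt_le_sqrt hge
    have hterm2 : (1 : ℝ) ≤ ν ^ ((1 : ℝ) / 3) *
        Real.sqrt ((k : ℝ) ^ 2 + (η - k * t) ^ 2 + (l : ℝ) ^ 2) := by
      have := mul_le_mul_of_nonneg_left hsq ha.le
      have hp : ν ^ ((1 : ℝ) / 3) * ν ^ (-(1 : ℝ) / 3) = 1 := by
        rw [← Real.rpow_add hν]; norm_num
      linarith [hp ▸ this]
    linarith
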